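/- There exists a constant C > 0 such that for all real ξ with |ξ| ≥ 1 and fixed τ > 0, |∫_0^τ θ^{1/2} e^{Ξ²(θ-τ)} dθ − √τ/Ξ²| ≤ C ξ^{-4}, where Ξ = σ₀ ξ / √2 for fixed σ₀ > 0. -/

import Mathlib

open MeasureTheory Real

private lemma exp_int (a τ : ℝ) (ha : 0 < a) :
    ∫ θ in (0:ℝ)..τ, Real.exp (a*(θ-τ)) = (1 - Real.exp (-(a*τ)))/a := by
  have h : ∀ θ ∈ Set.uIcc (0:ℝ) τ, HasDerivAt (fun x => Real.exp (a*(x-τ))/a)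
      (Real.exp (a*(θ-τ))) θ := by
    intro θ _
    have : HasDerivAt (fun x => a*(x-τ)) a θ := by
      simpa using ((hasDerivAt_id θ).sub_const τ).const_mul a
    have := (this.exp).div_const a
    simpa [mul_div_assoc, mul_comm, mul_div_cancel_left₀ _ ha.ne'] using this
  rw [intervalIntegral.integral_eq_sub_of_hasDerivAt h
    ((Real.continuous_exp.comp (by continuity)).intervalIntegrable 0 τ)]
  simp [sub_div]

private lemma lin_int_le (a τ : ℝ) (ha : 0 < a) (hτ : 0 ≤ τ) :
    ∫ θ in (0:ℝ)..τ, (τ-θ)*Real.exp (a*(θ-τ)) ≤ 1/a^2 := by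
  have h : ∀ θ ∈ Set.uIcc (0:ℝ) τ, HasDerivAt
      (fun x => Real.exp (a*(x-τ)) * ((τ-x)/a + 1/a^2))
      ((τ-θ)*Real.exp (a*(θ-τ))) θ := by
    intro θ _
    have h1 : HasDerivAt (fun x => a*(x-τ)) a θ := by
      simpa using ((hasDerivAt_id θ).sub_const τ).const_mul a
    have h2 : HasDerivAt (fun x : ℝ => (τ-x)/a + 1/a^2) (-1/a) θ := by
      have h3 : HasDerivAt (fun x : ℝ => τ - x) (-1) θ := by
        simpa using (hasDerivAt_id θ).const_sub τ
      exact (h3.div_const a).add_const (1/a^2)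
    have : HasDerivAt (fun x => Real.exp (a*(x-τ)) * ((τ-x)/a + 1/a^2)) _ θ := (h1.exp).mul h2
    convert this using 1
    field_simp [ha.ne']
    ring
  rw [intervalIntegral.integral_eq_sub_of_hasDerivAt h
    (((continuous_const.sub continuous_id).mul
      (Real.continuous_exp.comp (by continuity))).intervalIntegrable 0 τ)]
  have hexp : 0 ≤ Real.exp (a*(0-τ)) * ((τ-0)/a + 1/a^2) :=
    mul_nonneg (Real.exp_nonneg _) (add_nonneg (div_nonneg (by linarith) ha.le) (by positivity))
  have : Real.exp (a*(τ-τ)) * ((τ-τ)/a + 1/a^2) = 1/a^2 := by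
    simp
  rw [this]
  linarith

theorem integral_sqrt_asymptotic (σ₀ τ : ℝ) (hσ₀ : 0 < σ₀) (hτ : 0 < τ) :
    ∃ C > (0 : ℝ), ∀ ξ : ℝ, 1 ≤ |ξ| →
      |(∫ θ in (0 : ℝ)..τ, Real.sqrt θ * Real.exp ((σ₀ * ξ / Real.sqrt 2) ^ 2 * (θ - τ))) -
          Real.sqrt τ / (σ₀ * ξ / Real.sqrt 2) ^ 2| ≤ C / ξ ^ 4 := by
  have hsτ : 0 < Real.sqrt τ := Real.sqrt_pos.mpr hτ
  refine ⟨8 / (Real.sqrt τ * σ₀^4), by positivity, fun ξ hξ => ?_⟩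
  have hξ0 : ξ ≠ 0 := by intro h; simp [h] at hξ; linarith
  set a : ℝ := σ₀^2 * ξ^2 / 2 with ha_def
  have ha : 0 < a := by
    have : 0 < ξ^2 := by positivity
    positivity
  have hA : (σ₀ * ξ / Real.sqrt 2) ^ 2 = a := by
    rw [div_pow, Real.sq_sqrt (by norm_num : (2:ℝ) ≥ 0)]
    ring
  rw [hA]
  -- continuity / integrability facts
  have cexp : Continuous (fun θ : ℝ => Real.exp (a*(θ-τ))) :=
    Real.continuous_exp.comp (by continuity)
  have i1 : IntervalIntegrable (fun θ : ℝ => Real.sqrt θ * Real.exp (a*(θ-τ)))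
      volume 0 τ := (Real.continuous_sqrt.mul cexp).intervalIntegrable 0 τ
  have i2 : IntervalIntegrable (fun θ : ℝ => (Real.sqrt θ - Real.sqrt τ) * Real.exp (a*(θ-τ)))
      volume 0 τ :=
    ((Real.continuous_sqrt.sub continuous_const).mul cexp).intervalIntegrable 0 τ
  have i3 : IntervalIntegrable (fun θ : ℝ => Real.sqrt τ * Real.exp (a*(θ-τ)))
      volume 0 τ := (continuous_const.mul cexp).intervalIntegrable 0 τ
  -- split the integral
  have hsplit : (∫ θ in (0:ℝ)..τ, Real.sqrt θ * Real.exp (a*(θ-τ)))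
      = (∫ θ in (0:ℝ)..τ, (Real.sqrt θ - Real.sqrt τ) * Real.exp (a*(θ-τ)))
        + Real.sqrt τ * ∫ θ in (0:ℝ)..τ, Real.exp (a*(θ-τ)) := by
    rw [← intervalIntegral.integral_const_mul, ← intervalIntegral.integral_add i2 i3]
    congr 1
    ext θ
    ring
  rw [hsplit, exp_int a τ ha]
  -- the expression simplifies
  have heq : (∫ θ in (0:ℝ)..τ, (Real.sqrt θ - Real.sqrt τ) * Real.exp (a*(θ-τ)))
      + Real.sqrt τ * ((1 - Real.exp (-(a*τ)))/a) - Real.sqrt τ / a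
      = (∫ θ in (0:ℝ)..τ, (Real.sqrt θ - Real.sqrt τ) * Real.exp (a*(θ-τ)))
        - Real.sqrt τ * Real.exp (-(a*τ)) / a := by
    field_simp
    ring
  rw [heq]
  -- bound the first term
  have hE : |∫ θ in (0:ℝ)..τ, (Real.sqrt θ - Real.sqrt τ) * Real.exp (a*(θ-τ))|
      ≤ 1 / (Real.sqrt τ * a^2) := by
    have habs : |∫ θ in (0:ℝ)..τ, (Real.sqrt θ - Real.sqrt τ) * Real.exp (a*(θ-τ))|
        ≤ ∫ θ in (0:ℝ)..τ, |(Real.sqrt θ - Real.sqrt τ) * Real.exp (a*(θ-τ))| :=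
      intervalIntegral.abs_integral_le_integral_abs hτ.le
    have hmono : (∫ θ in (0:ℝ)..τ, |(Real.sqrt θ - Real.sqrt τ) * Real.exp (a*(θ-τ))|)
        ≤ ∫ θ in (0:ℝ)..τ, (1/Real.sqrt τ) * ((τ-θ) * Real.exp (a*(θ-τ))) := by
      apply intervalIntegral.integral_mono_on hτ.le
      · exact (((Real.continuous_sqrt.sub continuous_const).mul cexp).abs).intervalIntegrable 0 τ
      · exact (continuous_const.mul ((continuous_const.sub continuous_id).mul
          cexp)).intervalIntegrable 0 τ
      · intro θ hθ
        obtain ⟨h0θ, hθτ⟩ := hθ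
        rw [abs_mul, abs_of_pos (Real.exp_pos _)]
        have hsθτ : Real.sqrt θ ≤ Real.sqrt τ := Real.sqrt_le_sqrt hθτ
        have habs2 : |Real.sqrt θ - Real.sqrt τ| = Real.sqrt τ - Real.sqrt θ := by
          rw [abs_sub_comm, abs_of_nonneg (by linarith)]
        rw [habs2]
        have key : Real.sqrt τ - Real.sqrt θ ≤ (1/Real.sqrt τ) * (τ - θ) := by
          have h1 : Real.sqrt θ ^ 2 = θ := Real.sq_sqrt h0θ
          have h2 : Real.sqrt τ ^ 2 = τ := Real.sq_sqrt hτ.le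
          have h3 : 0 ≤ Real.sqrt θ := Real.sqrt_nonneg θ
          rw [div_mul_eq_mul_div, one_mul, le_div_iff₀ hsτ]
          nlinarith
        have := mul_le_mul_of_nonneg_right key (Real.exp_nonneg (a*(θ-τ)))
        calc (Real.sqrt τ - Real.sqrt θ) * Real.exp (a*(θ-τ))
            ≤ (1/Real.sqrt τ) * (τ - θ) * Real.exp (a*(θ-τ)) := this
          _ = (1/Real.sqrt τ) * ((τ-θ) * Real.exp (a*(θ-τ))) := by ring
    have hval : (∫ θ in (0:ℝ)..τ, (1/Real.sqrt τ) * ((τ-θ) * Real.exp (a*(θ-τ))))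
        ≤ (1/Real.sqrt τ) * (1/a^2) := by
      rw [intervalIntegral.integral_const_mul]
      exact mul_le_mul_of_nonneg_left (lin_int_le a τ ha hτ.le) (by positivity)
    calc |∫ θ in (0:ℝ)..τ, (Real.sqrt θ - Real.sqrt τ) * Real.exp (a*(θ-τ))|
        ≤ (1/Real.sqrt τ) * (1/a^2) := le_trans habs (le_trans hmono hval)
      _ = 1 / (Real.sqrt τ * a^2) := by rw [div_mul_div_comm, one_mul]
  -- bound the second term : exp(-(aτ)) ≤ 1/(aτ)
  have hexp_le : Real.exp (-(a*τ)) ≤ 1/(a*τ) := by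
    rw [Real.exp_neg]
    have h1 : a*τ ≤ Real.exp (a*τ) := by
      have := Real.add_one_le_exp (a*τ)
      linarith
    have h2 : 0 < a*τ := by positivity
    rw [inv_eq_one_div]
    exact one_div_le_one_div_of_le h2 h1
  have hterm2 : Real.sqrt τ * Real.exp (-(a*τ)) / a ≤ 1 / (Real.sqrt τ * a^2) := by
    have h1 : Real.sqrt τ * Real.exp (-(a*τ)) / a ≤ Real.sqrt τ * (1/(a*τ)) / a := by
      gcongr
    have h2 : Real.sqrt τ * (1/(a*τ)) / a = 1 / (Real.sqrt τ * a^2) := by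
      have hs2 : Real.sqrt τ ^ 2 = τ := Real.sq_sqrt hτ.le
      field_simp
      nlinarith [hs2]
    linarith
  -- combine
  have hbound : |(∫ θ in (0:ℝ)..τ, (Real.sqrt θ - Real.sqrt τ) * Real.exp (a*(θ-τ)))
      - Real.sqrt τ * Real.exp (-(a*τ)) / a| ≤ 2 / (Real.sqrt τ * a^2) := by
    have habs2 : |Real.sqrt τ * Real.exp (-(a*τ)) / a| = Real.sqrt τ * Real.exp (-(a*τ)) / a := by
      apply abs_of_nonneg; positivity
    calc |(∫ θ in (0:ℝ)..τ, (Real.sqrt θ - Real.sqrt τ) * Real.exp (a*(θ-τ)))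
        - Real.sqrt τ * Real.exp (-(a*τ)) / a|
        ≤ |∫ θ in (0:ℝ)..τ, (Real.sqrt θ - Real.sqrt τ) * Real.exp (a*(θ-τ))|
          + |Real.sqrt τ * Real.exp (-(a*τ)) / a| := abs_sub _ _
      _ ≤ 1 / (Real.sqrt τ * a^2) + 1 / (Real.sqrt τ * a^2) := by
          rw [habs2]; exact add_le_add hE hterm2
      _ = 2 / (Real.sqrt τ * a^2) := by ring
  refine le_trans hbound (le_of_eq ?_)
  rw [ha_def]
  field_simp
  ring
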